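/- Let C be a conference matrix of order r and H an Hadamard matrix of order k. Then A := C ⊗ H is an r-partite matrix of order n = rk with all entries of absolute value at most 1, and its trace norm equals n^(3/2)·sqrt(1 − 1/r). -/

import Mathlib

open Matrix BigOperators Kronecker

/-- The singular values of a square matrix `A` over an `RCLike` field: the square roots of the
eigenvalues of the Hermitian matrix `A * Aᴴ`. -/
noncomputable def singularValues {𝕜 : Type*} [RCLike 𝕜] {m : Type*} [Fintype m] [DecidableEq m]
    (A : Matrix m m 𝕜) : m → ℝ :=
  fun i => Real.sqrt ((Matrix.isHermitian_mul_conjTranspose_self A).eigenvalues i)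

/-- The trace norm (nuclear norm) of a square matrix: the sum of its singular values. -/
noncomputable def traceNorm {𝕜 : Type*} [RCLike 𝕜] {m : Type*} [Fintype m] [DecidableEq m]
    (A : Matrix m m 𝕜) : ℝ :=
  ∑ i, singularValues A i

lemma conjTranspose_kron {l m : Type*} [Fintype l] [Fintype m]
    (A : Matrix l l ℂ) (B : Matrix m m ℂ) : (A ⊗ₖ B)ᴴ = Aᴴ ⊗ₖ Bᴴ := by
  ext i j
  simp [conjTranspose_apply, kroneckerMap_apply, mul_comm]

lemma eigenvalues_of_smul_one {m : Type*} [Fintype m] [DecidableEq m]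
    {M : Matrix m m ℂ} (hM : M.IsHermitian) (c : ℝ) (h : M = (c : ℂ) • 1) (i : m) :
    hM.eigenvalues i = c := by
  subst h
  have hv := hM.mulVec_eigenvectorBasis i
  rw [smul_mulVec, one_mulVec] at hv
  have hne : ⇑(hM.eigenvectorBasis i) ≠ 0 := fun h0 =>
    hM.eigenvectorBasis.orthonormal.ne_zero i (by simpa using congrArg (WithLp.toLp 2) h0)
  obtain ⟨j, hj⟩ := Function.ne_iff.mp hne
  have := congrFun hv j
  simp only [Pi.smul_apply, smul_eq_mul, Complex.real_smul] at this
  have : (c : ℂ) = hM.eigenvalues i := mul_right_cancel₀ hj this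
  exact_mod_cast this.symm


/-- if `C` is a conference matrix of order `r` and `H` an Hadamard matrix of
order `k`, then `C ⊗ H` is an `r`-partite matrix of order `n = r k` (with respect to the
partition of the index set into the `r` blocks of length `k`), all its entries have absolute
value at most `1`, and its trace norm equals `n^(3/2) √(1 - 1/r)`. -/
theorem kronecker_conference_hadamard {r k : ℕ}
    (C : Matrix (Fin r) (Fin r) ℂ)
    (hCdiag : ∀ i, C i i = 0)
    (hCoff : ∀ i j, i ≠ j → ‖C i j‖ = 1)
    (hC : C * Cᴴ = ((r : ℂ) - 1) • 1)
    (H : Matrix (Fin k) (Fin k) ℂ)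
    (hHent : ∀ i j, ‖H i j‖ = 1)
    (hH : H * Hᴴ = (k : ℂ) • 1) :
    (∀ i j : Fin r × Fin k, i.1 = j.1 → (C ⊗ₖ H) i j = 0) ∧
    (∀ i j, ‖(C ⊗ₖ H) i j‖ ≤ 1) ∧
    traceNorm (C ⊗ₖ H) = ((r * k : ℕ) : ℝ) ^ (3 / 2 : ℝ) * Real.sqrt (1 - 1 / r) := by
  refine ⟨?_, ?_, ?_⟩
  · intro i j hij
    rw [kroneckerMap_apply, hij, hCdiag, zero_mul]
  · intro i j
    rw [kroneckerMap_apply, norm_mul, hHent, mul_one]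
    rcases eq_or_ne i.1 j.1 with h | h
    · rw [h, hCdiag]; simp
    · exact le_of_eq (hCoff _ _ h)
  · -- trace norm computation
    rcases Nat.eq_zero_or_pos r with hr | hr
    · subst hr
      simp [traceNorm, Finset.sum_of_isEmpty, Real.zero_rpow (by norm_num : (3/2:ℝ) ≠ 0)]
    rcases Nat.eq_zero_or_pos k with hk | hk
    · subst hk
      simp [traceNorm, Finset.sum_of_isEmpty, Real.zero_rpow (by norm_num : (3/2:ℝ) ≠ 0)]
    have hAAH : (C ⊗ₖ H) * (C ⊗ₖ H)ᴴ = ((((r : ℝ) - 1) * k : ℝ) : ℂ) • 1 := by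
      rw [conjTranspose_kron, ← mul_kronecker_mul, hC, hH, smul_kronecker,
        kronecker_smul, one_kronecker_one, smul_smul]
      push_cast
      ring_nf
    have heig : ∀ i, singularValues (C ⊗ₖ H) i = Real.sqrt (((r : ℝ) - 1) * k) := by
      intro i
      unfold singularValues
      rw [eigenvalues_of_smul_one _ _ hAAH]
    rw [traceNorm]
    simp only [heig, Finset.sum_const, Finset.card_univ, Fintype.card_prod, Fintype.card_fin,
      nsmul_eq_mul]
    -- algebra
    have hrpos : (0:ℝ) < r := by exact_mod_cast hr
    have hkpos : (0:ℝ) < k := by exact_mod_cast hk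
    have hn : (0:ℝ) < ((r*k : ℕ) : ℝ) := by positivity
    have h32 : ((r*k : ℕ) : ℝ) ^ (3/2 : ℝ) = ((r*k : ℕ) : ℝ) * Real.sqrt ((r*k : ℕ) : ℝ) := by
      rw [show (3/2:ℝ) = 1 + 1/2 by norm_num, Real.rpow_add hn, Real.rpow_one,
        Real.sqrt_eq_rpow]
    rw [h32, mul_assoc, ← Real.sqrt_mul hn.le]
    have harg : ((r*k:ℕ):ℝ) * (1 - 1/(r:ℝ)) = ((r:ℝ)-1)*k := by
      have : (r:ℝ) ≠ 0 := hrpos.ne'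
      push_cast
      field_simp
    rw [harg]
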